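/- Let F be a field of characteristic 2 and let (A,σ) be a central simple algebra over F with an orthogonal involution σ of the first kind. Assume (A,σ) is direct, i.e., for every x ∈ A, σ(x)x ∈ Alt(A,σ) implies x = 0. Then Sym(A,σ)⁺ is a subfield of A: it is an F-subspace of A containing F·1, closed under multiplication, commutative, and every nonzero element of Sym(A,σ)⁺ is invertible in A with inverse lying in Sym(A,σ)⁺. -/
import Mathlib


open scoped TensorProduct

section AlgDefs
variable (F : Type*) [Field F] {A : Type*} [Ring A] [Algebra F A]

/-- The set `Alt(A,σ) = {σ x - x : x ∈ A}` of alternating elements. -/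
def AltSet (σ : A →ₗ[F] A) : Set A := Set.range fun x => σ x - x

/-- `σ` is an `F`-linear involution (anti-automorphism of order two) of the first kind. -/
def IsInvolutionOn (σ : A →ₗ[F] A) : Prop :=
  (∀ x y : A, σ (x * y) = σ y * σ x) ∧ ∀ x : A, σ (σ x) = x

/-- `σ` is an orthogonal involution: an involution with `1 ∉ Alt(A,σ)`. -/
def IsOrthInvolution (σ : A →ₗ[F] A) : Prop :=
  IsInvolutionOn F σ ∧ (1 : A) ∉ AltSet F σ

/-- `Sym(A,σ)⁺ = {x ∈ Sym(A,σ) : x² ∈ F·1}`. -/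
def SymPlus (σ : A →ₗ[F] A) : Set A :=
  {x | σ x = x ∧ ∃ α : F, x ^ 2 = algebraMap F A α}

/-- `Alt(A,σ)⁺ = {x ∈ Alt(A,σ) : x² ∈ F·1}`. -/
def AltPlus (σ : A →ₗ[F] A) : Set A :=
  {x | x ∈ AltSet F σ ∧ ∃ α : F, x ^ 2 = algebraMap F A α}

/-- `σ` is isotropic: `σ(x)·x = 0` for some nonzero `x`. -/
def IsIsotropicInv (σ : A →ₗ[F] A) : Prop := ∃ x : A, x ≠ 0 ∧ σ x * x = 0

/-- An `F`-subalgebra of `A` which is central simple over `F`. -/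
def IsCentralSimpleSub (Q : Subalgebra F A) : Prop :=
  (∀ z ∈ Q, (∀ y ∈ Q, z * y = y * z) → ∃ α : F, z = algebraMap F A α) ∧
    IsSimpleRing Q

/-- A `σ`-invariant quaternion subalgebra of `A`: a `4`-dimensional central simple
`F`-subalgebra stable under `σ`. -/
def IsQuatSub (σ : A →ₗ[F] A) (Q : Subalgebra F A) : Prop :=
  Module.finrank F Q = 4 ∧ IsCentralSimpleSub F Q ∧ ∀ x ∈ Q, σ x ∈ Q

/-- `(A, σ)` is totally decomposable with `n` quaternion factors: `A` carries `n`
pairwise commuting `σ`-invariant quaternion subalgebras generating `A`, with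
`dim_F A = 4 ^ n` (equivalently, `(A,σ)` is isomorphic to the tensor product of the
quaternion algebras with involution `(Qᵢ, σ|_{Qᵢ})`); then `deg_F A = 2 ^ n`. -/
def IsTotDec (σ : A →ₗ[F] A) (n : ℕ) : Prop :=
  Module.finrank F A = 4 ^ n ∧
    ∃ Q : Fin n → Subalgebra F A,
      (∀ i, IsQuatSub F σ (Q i)) ∧
      (∀ i j, i ≠ j → ∀ x ∈ Q i, ∀ y ∈ Q j, x * y = y * x) ∧
      iSup Q = ⊤

/-- `S` is an inseparable subalgebra of `(A, σ)`, `A` of degree `2 ^ n`: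
a (unital, commutative) subalgebra contained in `Sym(A,σ)⁺`, of dimension `2 ^ n`,
self-centralizing, and generated by `n` elements. -/
def IsInsepSub (σ : A →ₗ[F] A) (n : ℕ) (S : Subalgebra F A) : Prop :=
  (S : Set A) ⊆ SymPlus F σ ∧
  Module.finrank F S = 2 ^ n ∧
  Subalgebra.centralizer F (S : Set A) = S ∧
  ∃ g : Fin n → A, Algebra.adjoin F (Set.range g) = S

end AlgDefs

/-- For a direct central simple algebra with orthogonal involution `(A,σ)`
over a field `F` of characteristic two, `Sym(A,σ)⁺` is a subfield of `A`. -/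
theorem statement_0 {F A : Type*} [Field F] [CharP F 2] [Ring A] [Algebra F A]
    [FiniteDimensional F A]
    (hcentral : ∀ z : A, (∀ y : A, z * y = y * z) → ∃ α : F, z = algebraMap F A α)
    (hsimple : IsSimpleRing A)
    (σ : A →ₗ[F] A) (hσ : IsOrthInvolution F σ)
    (hdirect : ∀ x : A, σ x * x ∈ AltSet F σ → x = 0) :
    (∀ α : F, algebraMap F A α ∈ SymPlus F σ) ∧
    (∀ x ∈ SymPlus F σ, ∀ y ∈ SymPlus F σ, x + y ∈ SymPlus F σ) ∧
    (∀ c : F, ∀ x ∈ SymPlus F σ, c • x ∈ SymPlus F σ) ∧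
    (∀ x ∈ SymPlus F σ, ∀ y ∈ SymPlus F σ, x * y ∈ SymPlus F σ) ∧
    (∀ x ∈ SymPlus F σ, ∀ y ∈ SymPlus F σ, x * y = y * x) ∧
    (∀ x ∈ SymPlus F σ, x ≠ 0 → ∃ y ∈ SymPlus F σ, x * y = 1 ∧ y * x = 1) := by
  obtain ⟨⟨σmul, σσ⟩, -⟩ := hσ
  have h1 : σ 1 = 1 := by
    have h := σmul (σ 1) 1
    rw [mul_one, σσ, mul_one] at h
    exact h.symm
  have char2A : ∀ a : A, a + a = 0 := by
    intro a
    have h2 : (2 : F) = 0 := CharTwo.two_eq_zero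
    have := two_smul F a
    rw [h2, zero_smul] at this
    exact this.symm
  have negself : ∀ a : A, -a = a := fun a => neg_eq_of_add_eq_zero_left (char2A a)
  -- commutativity
  have hcomm : ∀ x ∈ SymPlus F σ, ∀ y ∈ SymPlus F σ, x * y = y * x := by
    rintro x ⟨hx, α, hα⟩ y ⟨hy, β, hβ⟩
    set z := x * y with hz
    have hσz : σ z = y * x := by rw [hz, σmul, hx, hy]
    have hxx : x * x = algebraMap F A α := by rw [← pow_two, hα]
    have hyy : y * y = algebraMap F A β := by rw [← pow_two, hβ]
    have hzz : σ z * z = algebraMap F A (α * β) := by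
      rw [hσz, hz, show y * x * (x * y) = y * (x * x) * y by noncomm_ring, hxx,
        show y * algebraMap F A α * y = algebraMap F A α * (y * y) by
          rw [← Algebra.commutes]; noncomm_ring, hyy, ← map_mul]
    have hzz' : z * σ z = algebraMap F A (α * β) := by
      rw [hσz, hz, show x * y * (y * x) = x * (y * y) * x by noncomm_ring, hyy,
        show x * algebraMap F A β * x = algebraMap F A β * (x * x) by
          rw [← Algebra.commutes]; noncomm_ring, hxx, ← map_mul, mul_comm β α]
    set c := σ z - z with hc
    have hσc : σ c = c := by
      rw [hc, map_sub, σσ, show z - σ z = -(σ z - z) from (neg_sub _ _).symm, negself]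
    have hcc : c * c = σ (z * z) - z * z := by
      have expand : (σ z - z) * (σ z - z)
          = σ z * σ z - σ z * z - z * σ z + z * z := by noncomm_ring
      rw [hc, expand, ← σmul, hzz, hzz']
      have h0 : algebraMap F A (α * β) + algebraMap F A (α * β) = 0 :=
        char2A _
      have : σ (z * z) - algebraMap F A (α * β) - algebraMap F A (α * β) + z * z
          = σ (z * z) + z * z - (algebraMap F A (α * β) + algebraMap F A (α * β)) := by
        abel
      rw [this, h0, sub_zero, sub_eq_add_neg, negself]
    have hc0 : c = 0 := by
      apply hdirect
      rw [hσc]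
      exact ⟨z * z, hcc.symm⟩
    have : σ z = z := by
      have := sub_eq_zero.mp hc0
      exact this
    rw [← this]; exact hσz
  -- scalar multiples
  have hsmul : ∀ c : F, ∀ x ∈ SymPlus F σ, c • x ∈ SymPlus F σ := by
    rintro c x ⟨hx, α, hα⟩
    refine ⟨by rw [map_smul, hx], c ^ 2 * α, ?_⟩
    rw [smul_pow, hα, map_mul, Algebra.smul_def]
  refine ⟨?_, ?_, hsmul, ?_, hcomm, ?_⟩
  · -- scalars
    intro α
    refine ⟨?_, α ^ 2, by rw [← map_pow]⟩
    rw [Algebra.algebraMap_eq_smul_one, map_smul, h1]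
  · -- addition
    rintro x hxm y hym
    obtain ⟨hx, α, hα⟩ := hxm
    obtain ⟨hy, β, hβ⟩ := hym
    refine ⟨by rw [map_add, hx, hy], α + β, ?_⟩
    have hxy := hcomm x ⟨hx, α, hα⟩ y ⟨hy, β, hβ⟩
    have expand : (x + y) ^ 2 = x ^ 2 + (x * y + y * x) + y ^ 2 := by
      rw [pow_two, pow_two, pow_two]; noncomm_ring
    rw [expand, ← hxy, char2A (x * y), add_zero, hα, hβ, ← map_add]
  · -- multiplication
    rintro x hxm y hym
    obtain ⟨hx, α, hα⟩ := hxm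
    obtain ⟨hy, β, hβ⟩ := hym
    have hxy := hcomm x ⟨hx, α, hα⟩ y ⟨hy, β, hβ⟩
    refine ⟨by rw [σmul, hx, hy, hxy], α * β, ?_⟩
    have : (x * y) ^ 2 = x * (y * x) * y := by rw [pow_two]; noncomm_ring
    rw [this, ← hxy, show x * (x * y) * y = x ^ 2 * y ^ 2 by
      rw [pow_two, pow_two]; noncomm_ring, hα, hβ, ← map_mul]
  · -- inverses
    rintro x ⟨hx, α, hα⟩ hx0
    have hα0 : α ≠ 0 := by
      rintro rfl
      apply hx0
      apply hdirect
      rw [hx, ← pow_two, hα, map_zero]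
      exact ⟨0, by simp⟩
    refine ⟨α⁻¹ • x, hsmul α⁻¹ x ⟨hx, α, hα⟩, ?_, ?_⟩
    · rw [mul_smul_comm, ← pow_two, hα, Algebra.algebraMap_eq_smul_one, smul_smul,
        inv_mul_cancel₀ hα0, one_smul]
    · rw [smul_mul_assoc, ← pow_two, hα, Algebra.algebraMap_eq_smul_one, smul_smul,
        inv_mul_cancel₀ hα0, one_smul]
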